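/- For any s ≥ 1 and any matrix A ∈ ℝ^{m×np}, the goodness measures satisfy √s · √(ω_{b∞}(A^T A, s)) ≥ ω₂(A, s) ≥ ρ_{s²}(A); equivalently, ω₂(A,s)² ≤ s · ω_{b∞}(A^T A, s) and ω₂(A,s) ≥ ρ_{s²}(A). -/
import Mathlib


open MeasureTheory ProbabilityTheory Finset Matrix

/-- Euclidean norm of a finitely-indexed real vector. -/
noncomputable def vnorm {ι : Type*} [Fintype ι] (v : ι → ℝ) : ℝ :=
  Real.sqrt (∑ i, (v i) ^ 2)

/-- Euclidean norm of the `i`-th block of `x ∈ ℝ^{np}` (blocks indexed by `Fin p`). -/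
noncomputable def bnorm {n p : ℕ} (x : Fin p × Fin n → ℝ) (i : Fin p) : ℝ :=
  vnorm (fun j => x (i, j))

/-- Block-ℓ1 norm: `‖x‖_{b1} = ∑ i, ‖x_i‖₂`. -/
noncomputable def bl1 {n p : ℕ} (x : Fin p × Fin n → ℝ) : ℝ :=
  ∑ i, bnorm x i

/-- Block-ℓ∞ norm: `‖x‖_{b∞} = max_i ‖x_i‖₂`. -/
noncomputable def blinf {n p : ℕ} (x : Fin p × Fin n → ℝ) : ℝ :=
  ⨆ i, bnorm x i

open scoped Classical in
/-- Block support: indices of nonzero blocks. -/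
noncomputable def bsupp {n p : ℕ} (x : Fin p × Fin n → ℝ) : Finset (Fin p) :=
  Finset.univ.filter (fun i => ∃ j, x (i, j) ≠ 0)

/-- `ω₂(A,s) = inf { ‖Az‖₂ / ‖z‖_{b∞} : z ≠ 0, ‖z‖_{b1} ≤ s ‖z‖_{b∞} }`. -/
noncomputable def omega2 {m n p : ℕ} (A : Matrix (Fin m) (Fin p × Fin n) ℝ) (s : ℝ) : ℝ :=
  sInf {r | ∃ z : Fin p × Fin n → ℝ, z ≠ 0 ∧ bl1 z ≤ s * blinf z ∧
    r = vnorm (A.mulVec z) / blinf z}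

/-- `ω_{b∞}(AᵀA,s) = inf { ‖AᵀAz‖_{b∞} / ‖z‖_{b∞} : z ≠ 0, ‖z‖_{b1} ≤ s ‖z‖_{b∞} }`. -/
noncomputable def omegaBInf {m n p : ℕ} (A : Matrix (Fin m) (Fin p × Fin n) ℝ) (s : ℝ) : ℝ :=
  sInf {r | ∃ z : Fin p × Fin n → ℝ, z ≠ 0 ∧ bl1 z ≤ s * blinf z ∧
    r = blinf ((Aᵀ * A).mulVec z) / blinf z}

/-- Block ℓ1-constrained minimal singular value
`ρ_s(A) = inf { ‖Az‖₂ / ‖z‖₂ : z ≠ 0, ‖z‖_{b1}² ≤ s ‖z‖₂² }`. -/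
noncomputable def rhoCMSV {m n p : ℕ} (A : Matrix (Fin m) (Fin p × Fin n) ℝ) (s : ℝ) : ℝ :=
  sInf {r | ∃ z : Fin p × Fin n → ℝ, z ≠ 0 ∧ (bl1 z) ^ 2 ≤ s * (vnorm z) ^ 2 ∧
    r = vnorm (A.mulVec z) / vnorm z}

/-- Spectral norm (largest singular value) of a real matrix, as the ℓ2→ℓ2 operator norm. -/
noncomputable def specNorm {ι κ : Type*} [Fintype ι] [Fintype κ] (M : Matrix ι κ ℝ) : ℝ :=
  sSup {r | ∃ v : κ → ℝ, vnorm v ≤ 1 ∧ r = vnorm (M.mulVec v)}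

/-- The `j`-th column block (of `n` columns) of a matrix with `np` columns. -/
def colBlock {ι : Type*} {n p : ℕ} (Q : Matrix ι (Fin p × Fin n) ℝ) (j : Fin p) :
    Matrix ι (Fin n) ℝ := Matrix.of fun r c => Q r (j, c)

/-- The `l`-th row block (of `n` rows) of a matrix with `np` rows. -/
def rowBlock {κ : Type*} {n p : ℕ} (P : Matrix (Fin p × Fin n) κ ℝ) (l : Fin p) :
    Matrix (Fin n) κ ℝ := Matrix.of fun r c => P (l, r) c

/-- `δ_{ij} Iₙ`. -/
def deltaId (n : ℕ) {p : ℕ} (i j : Fin p) : Matrix (Fin n) (Fin n) ℝ :=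
  if i = j then 1 else 0

/-- Orlicz ψ₂ norm of a scalar random variable. -/
noncomputable def psi2 {Ω : Type*} [MeasurableSpace Ω] (μ : Measure Ω) (Y : Ω → ℝ) : ℝ :=
  sInf {t | 0 < t ∧ ∫ ω, Real.exp ((Y ω) ^ 2 / t ^ 2) ∂μ ≤ 2}

section aux
variable {m n p : ℕ}

lemma vnorm_nonneg {ι : Type*} [Fintype ι] (v : ι → ℝ) : 0 ≤ vnorm v := Real.sqrt_nonneg _

lemma vnorm_sq {ι : Type*} [Fintype ι] (v : ι → ℝ) : (vnorm v)^2 = ∑ i, (v i)^2 :=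
  Real.sq_sqrt (Finset.sum_nonneg fun i _ => sq_nonneg _)

lemma bnorm_nonneg (z : Fin p × Fin n → ℝ) (i : Fin p) : 0 ≤ bnorm z i := Real.sqrt_nonneg _

lemma blinf_nonneg (z : Fin p × Fin n → ℝ) : 0 ≤ blinf z :=
  Real.iSup_nonneg (bnorm_nonneg z)

lemma bl1_nonneg (z : Fin p × Fin n → ℝ) : 0 ≤ bl1 z :=
  Finset.sum_nonneg fun i _ => bnorm_nonneg z i

lemma bnorm_le_blinf (z : Fin p × Fin n → ℝ) (i : Fin p) : bnorm z i ≤ blinf z :=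
  le_ciSup (Set.Finite.bddAbove (Set.finite_range _)) i

lemma blinf_le_vnorm (z : Fin p × Fin n → ℝ) : blinf z ≤ vnorm z := by
  apply Real.iSup_le _ (vnorm_nonneg z)
  intro i
  apply Real.sqrt_le_sqrt
  rw [Fintype.sum_prod_type]
  exact Finset.single_le_sum (f := fun i => ∑ j, z (i,j)^2)
    (fun i _ => Finset.sum_nonneg fun j _ => sq_nonneg _) (Finset.mem_univ i)

lemma blinf_pos {z : Fin p × Fin n → ℝ} (hz : z ≠ 0) : 0 < blinf z := by
  obtain ⟨x, hx⟩ := Function.ne_iff.mp hz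
  have h1 : 0 < bnorm z x.1 := by
    apply Real.sqrt_pos.mpr
    have h0 : (0:ℝ) < z (x.1, x.2) ^ 2 := by
      have : z (x.1, x.2) ≠ 0 := by simpa using hx
      positivity
    calc (0:ℝ) < z (x.1, x.2) ^ 2 := h0
      _ ≤ ∑ j, z (x.1, j)^2 :=
        Finset.single_le_sum (f := fun j => z (x.1, j)^2) (fun j _ => sq_nonneg _)
          (Finset.mem_univ x.2)
  exact h1.trans_le (bnorm_le_blinf z x.1)

lemma vnorm_pos {z : Fin p × Fin n → ℝ} (hz : z ≠ 0) : 0 < vnorm z :=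
  lt_of_lt_of_le (blinf_pos hz) (blinf_le_vnorm z)

lemma sum_mul_le {n : ℕ} (a b : Fin n → ℝ) : ∑ j, a j * b j ≤ vnorm a * vnorm b := by
  have h := Finset.sum_mul_sq_le_sq_mul_sq Finset.univ a b
  calc ∑ j, a j * b j ≤ |(∑ j, a j * b j)| := le_abs_self _
    _ = Real.sqrt ((∑ j, a j * b j)^2) := (Real.sqrt_sq_eq_abs _).symm
    _ ≤ Real.sqrt ((∑ j, a j^2) * (∑ j, b j^2)) := Real.sqrt_le_sqrt h
    _ = vnorm a * vnorm b := Real.sqrt_mul (Finset.sum_nonneg fun j _ => sq_nonneg _) _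

lemma key (A : Matrix (Fin m) (Fin p × Fin n) ℝ) (z : Fin p × Fin n → ℝ) :
    (vnorm (A.mulVec z))^2 ≤ bl1 z * blinf ((Aᵀ * A).mulVec z) := by
  set w := (Aᵀ * A).mulVec z with hw
  have h1 : (vnorm (A.mulVec z))^2 = ∑ x, z x * w x := by
    rw [vnorm_sq]
    have h2 : ∑ k, (A.mulVec z k)^2 = (A.mulVec z) ⬝ᵥ (A.mulVec z) := by
      simp [dotProduct, pow_two]
    have h3 : z ⬝ᵥ ((Aᵀ*A) *ᵥ z) = (A *ᵥ z) ⬝ᵥ (A *ᵥ z) := by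
      rw [← Matrix.mulVec_mulVec, Matrix.dotProduct_mulVec, Matrix.vecMul_transpose]
    rw [h2, ← h3, hw]
    rfl
  rw [h1, Fintype.sum_prod_type]
  calc ∑ i, ∑ j, z (i,j) * w (i,j) ≤ ∑ i, bnorm z i * bnorm w i :=
      Finset.sum_le_sum fun i _ => sum_mul_le _ _
    _ ≤ ∑ i, bnorm z i * blinf w :=
      Finset.sum_le_sum fun i _ =>
        mul_le_mul_of_nonneg_left (bnorm_le_blinf w i) (bnorm_nonneg z i)
    _ = bl1 z * blinf w := by rw [bl1, ← Finset.sum_mul]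

end aux

/-- Lemma 1: `√s √(ω_{b∞}(AᵀA,s)) ≥ ω₂(A,s) ≥ ρ_{s²}(A)`; equivalently
`ω₂(A,s)² ≤ s ω_{b∞}(AᵀA,s)` and `ω₂(A,s) ≥ ρ_{s²}(A)`. -/
theorem stmt9 {m n p : ℕ} (A : Matrix (Fin m) (Fin p × Fin n) ℝ) (s : ℝ) (hs : 1 ≤ s) :
    (omega2 A s ≤ Real.sqrt s * Real.sqrt (omegaBInf A s) ∧ rhoCMSV A (s ^ 2) ≤ omega2 A s) ∧
    ((omega2 A s) ^ 2 ≤ s * omegaBInf A s ∧ rhoCMSV A (s ^ 2) ≤ omega2 A s) := by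
  have hs0 : (0:ℝ) < s := lt_of_lt_of_le one_pos hs
  by_cases hE : Nonempty (Fin p × Fin n)
  · obtain ⟨⟨i₀, j₀⟩⟩ := hE
    classical
    set e : Fin p × Fin n → ℝ := fun x => if x = (i₀, j₀) then 1 else 0 with he
    have he0 : e ≠ 0 := by
      intro h
      have := congrFun h (i₀, j₀)
      simp [he] at this
    have hbn : ∀ i, bnorm e i = if i = i₀ then 1 else 0 := by
      intro i
      simp only [bnorm, vnorm, he, Prod.mk.injEq]
      by_cases hi : i = i₀
      · subst hi
        simp
      · simp [hi]
    have hbl1 : bl1 e = 1 := by simp [bl1, hbn]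
    have hblinf : blinf e = 1 := by
      apply le_antisymm
      · apply Real.iSup_le _ zero_le_one
        intro i
        rw [hbn]
        split <;> norm_num
      · calc (1:ℝ) = bnorm e i₀ := by simp [hbn]
          _ ≤ blinf e := bnorm_le_blinf e i₀
    have hfeas2 : bl1 e ≤ s * blinf e := by rw [hbl1, hblinf]; linarith
    have hvne : vnorm e = 1 := by
      rw [vnorm]
      have : ∑ x : Fin p × Fin n, (e x)^2 = 1 := by simp [he]
      rw [this, Real.sqrt_one]
    -- the three feasibility sets
    set S2 := {r | ∃ z : Fin p × Fin n → ℝ, z ≠ 0 ∧ bl1 z ≤ s * blinf z ∧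
      r = vnorm (A.mulVec z) / blinf z} with hS2
    set SI := {r | ∃ z : Fin p × Fin n → ℝ, z ≠ 0 ∧ bl1 z ≤ s * blinf z ∧
      r = blinf ((Aᵀ * A).mulVec z) / blinf z} with hSI
    set SR := {r | ∃ z : Fin p × Fin n → ℝ, z ≠ 0 ∧ (bl1 z) ^ 2 ≤ s ^ 2 * (vnorm z) ^ 2 ∧
      r = vnorm (A.mulVec z) / vnorm z} with hSR
    have hO2 : omega2 A s = sInf S2 := rfl
    have hOI : omegaBInf A s = sInf SI := rfl
    have hOR : rhoCMSV A (s ^ 2) = sInf SR := rfl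
    have hmem2 : (vnorm (A.mulVec e) / blinf e) ∈ S2 := ⟨e, he0, hfeas2, rfl⟩
    have hmemI : (blinf ((Aᵀ * A).mulVec e) / blinf e) ∈ SI := ⟨e, he0, hfeas2, rfl⟩
    have bdd2 : BddBelow S2 := by
      refine ⟨0, ?_⟩
      rintro r ⟨z, -, -, rfl⟩
      exact div_nonneg (vnorm_nonneg _) (blinf_nonneg _)
    have bddR : BddBelow SR := by
      refine ⟨0, ?_⟩
      rintro r ⟨z, -, -, rfl⟩
      exact div_nonneg (vnorm_nonneg _) (vnorm_nonneg _)
    have hO2nn : 0 ≤ omega2 A s := by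
      rw [hO2]
      apply Real.sInf_nonneg
      rintro r ⟨z, -, -, rfl⟩
      exact div_nonneg (vnorm_nonneg _) (blinf_nonneg _)
    have hOInn : 0 ≤ omegaBInf A s := by
      rw [hOI]
      apply Real.sInf_nonneg
      rintro r ⟨z, -, -, rfl⟩
      exact div_nonneg (blinf_nonneg _) (blinf_nonneg _)
    -- rho ≤ omega2
    have hrho_le : rhoCMSV A (s ^ 2) ≤ omega2 A s := by
      rw [hO2, hOR]
      apply le_csInf ⟨_, hmem2⟩
      rintro r ⟨z, hz, hfe, rfl⟩
      have hbz : 0 < blinf z := blinf_pos hz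
      have hvz : 0 < vnorm z := vnorm_pos hz
      have hfe' : (bl1 z)^2 ≤ s^2 * (vnorm z)^2 := by
        have h1 : bl1 z ≤ s * vnorm z := by
          refine hfe.trans ?_
          have := blinf_le_vnorm z
          nlinarith
        nlinarith [bl1_nonneg z]
      calc sInf SR ≤ vnorm (A.mulVec z) / vnorm z := csInf_le bddR ⟨z, hz, hfe', rfl⟩
        _ ≤ vnorm (A.mulVec z) / blinf z := by
          apply div_le_div_of_nonneg_left (vnorm_nonneg _) hbz (blinf_le_vnorm z)
    -- omega2² ≤ s ⬝ omegaBInf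
    have hsq : (omega2 A s) ^ 2 ≤ s * omegaBInf A s := by
      rw [hOI]
      rw [← div_le_iff₀' hs0]
      apply le_csInf ⟨_, hmemI⟩
      rintro r ⟨z, hz, hfe, rfl⟩
      have hbz : 0 < blinf z := blinf_pos hz
      set w := (Aᵀ * A).mulVec z with hw
      have h1 : omega2 A s ≤ vnorm (A.mulVec z) / blinf z :=
        csInf_le bdd2 ⟨z, hz, hfe, rfl⟩
      have h2 : omega2 A s * blinf z ≤ vnorm (A.mulVec z) :=
        (le_div_iff₀ hbz).mp h1
      have h3 : (vnorm (A.mulVec z))^2 ≤ s * blinf z * blinf w := by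
        refine (key A z).trans ?_
        have := blinf_nonneg w
        nlinarith
      rw [div_le_div_iff₀ hs0 hbz]
      nlinarith [mul_le_mul h2 h2 (mul_nonneg hO2nn hbz.le) (vnorm_nonneg (A.mulVec z)),
        h3, hbz, sq_nonneg (omega2 A s)]
    refine ⟨⟨?_, hrho_le⟩, hsq, hrho_le⟩
    calc omega2 A s = Real.sqrt ((omega2 A s)^2) := (Real.sqrt_sq hO2nn).symm
      _ ≤ Real.sqrt (s * omegaBInf A s) := Real.sqrt_le_sqrt hsq
      _ = Real.sqrt s * Real.sqrt (omegaBInf A s) := Real.sqrt_mul hs0.le _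
  · have hzero : ∀ z : Fin p × Fin n → ℝ, z = 0 := fun z =>
      funext fun x => absurd ⟨x⟩ hE
    have hset : ∀ (P : (Fin p × Fin n → ℝ) → Prop) (f : (Fin p × Fin n → ℝ) → ℝ),
        {r | ∃ z : Fin p × Fin n → ℝ, z ≠ 0 ∧ P z ∧ r = f z} = ∅ := by
      intro P f
      rw [Set.eq_empty_iff_forall_notMem]
      rintro r ⟨z, hz, -⟩
      exact hz (hzero z)
    have h2 : omega2 A s = 0 := by rw [omega2, hset, Real.sInf_empty]
    have hI : omegaBInf A s = 0 := by rw [omegaBInf, hset, Real.sInf_empty]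
    have hR : rhoCMSV A (s ^ 2) = 0 := by rw [rhoCMSV, hset, Real.sInf_empty]
    rw [h2, hI, hR]
    norm_num [Real.sqrt_nonneg]
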